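/- The free-choice ratio of the cycle C_n equals 2 + 1/⌊n/2⌋, i.e., inf{a/b : C_n is (a,b)-free-choosable} = 2 + 1/⌊n/2⌋, and moreover C_n is (a,b)-free-choosable for every pair (a,b) with a/b ≥ 2 + 1/⌊n/2⌋. -/

import Mathlib

/-- The cycle `C_n` on vertices `0,…,n-1` is `(a,b)`-free-choosable. -/
def CycleFreeChoosable (n a b : ℕ) : Prop :=
  ∀ v0, v0 < n → ∀ L : ℕ → Finset ℕ,
    (L v0).card = b → (∀ v, v < n → v ≠ v0 → (L v).card = a) →
    ∃ c : ℕ → Finset ℕ, (∀ i, i < n → c i ⊆ L i ∧ (c i).card = b) ∧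
      ∀ i, i < n → Disjoint (c i) (c ((i + 1) % n))

namespace CFC

noncomputable def gseq (b n : ℕ) (M : ℕ → Finset ℕ) : ℕ → Finset ℕ × ℕ
  | 0 => (M (n-1) \ M 0, b)
  | (t+1) =>
      (if (gseq b n M t).2 + b - (gseq b n M t).1.card = 0 then M (n-2-t)
       else M (n-2-t) \ (gseq b n M t).1,
       (gseq b n M t).2 + b - (gseq b n M t).1.card)

lemma exists_pick (b r : ℕ) (A R : Finset ℕ) (hb : b ≤ A.card) (hr : r ≤ (A ∩ R).card)
    (hrb : r ≤ b) : ∃ C : Finset ℕ, C ⊆ A ∧ C.card = b ∧ r ≤ (C ∩ R).card := by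
  obtain ⟨D, hD, hDcard⟩ := Finset.exists_subset_card_eq hr
  obtain ⟨C, hDC, hCA, hCcard⟩ :=
    Finset.exists_subsuperset_card_eq (hD.trans Finset.inter_subset_left) (by omega) hb
  refine ⟨C, hCA, hCcard, ?_⟩
  calc r = D.card := hDcard.symm
    _ ≤ (C ∩ R).card := Finset.card_le_card (fun x hx => Finset.mem_inter.2
        ⟨hDC hx, (Finset.mem_inter.1 (hD hx)).2⟩)

lemma card_inter_inter {C R1 R2 : Finset ℕ} (hd : Disjoint R1 R2) :
    (C ∩ R1).card + (C ∩ R2).card ≤ C.card := by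
  rw [← Finset.card_union_of_disjoint (Finset.disjoint_left.2 (fun x hx1 hx2 =>
      (Finset.disjoint_left.1 hd (Finset.mem_inter.1 hx1).2) (Finset.mem_inter.1 hx2).2))]
  exact Finset.card_le_card (by
    intro x hx
    rcases Finset.mem_union.1 hx with h | h
    · exact (Finset.mem_inter.1 h).1
    · exact (Finset.mem_inter.1 h).1)

section
set_option linter.unusedSectionVars false
variable (b s a n : ℕ) (M : ℕ → Finset ℕ)

lemma gseq_fst_subset : ∀ t, (gseq b n M t).1 ⊆ M (n-1-t) := by
  intro t
  cases t with
  | zero => exact Finset.sdiff_subset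
  | succ t =>
      show (if _ then M (n-2-t) else M (n-2-t) \ _) ⊆ M (n-1-(t+1))
      have : n - 1 - (t+1) = n - 2 - t := by omega
      rw [this]
      split
      · exact subset_rfl
      · exact Finset.sdiff_subset

variable (hn : 3 ≤ n) (hb : 0 < b) (hs : a = 2*b + s)
  (hM0 : (M 0).card = b) (hMa : ∀ j, 1 ≤ j → j ≤ n-1 → (M j).card = a)

include hn hb hs hM0 hMa

lemma gseq_card : ∀ t, t ≤ n-2 → (gseq b n M t).2 ≤ b ∧ (gseq b n M t).2 ≤ (gseq b n M t).1.card := by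
  intro t
  induction t with
  | zero =>
      intro _
      refine ⟨le_rfl, ?_⟩
      have h1 : (M (n-1)).card = a := hMa (n-1) (by omega) le_rfl
      have h2 := Finset.le_card_sdiff (M 0) (M (n-1))
      simp only [gseq]
      omega
  | succ t ih =>
      intro ht
      have ih' := ih (by omega)
      set r := (gseq b n M t).2 with hr
      set R := (gseq b n M t).1 with hR
      have h2a : (gseq b n M (t+1)).2 = r + b - R.card := rfl
      constructor
      · omega
      · rw [h2a]
        show r + b - R.card ≤ (if r + b - R.card = 0 then M (n-2-t) else M (n-2-t) \ R).card
        split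
        · omega
        · have hcard : (M (n-2-t)).card = a := hMa _ (by omega) (by omega)
          have := Finset.le_card_sdiff R (M (n-2-t))
          omega

lemma gseq_dead : ∀ t, t + 1 ≤ n-2 → (gseq b n M t).2 = 0 → (gseq b n M (t+1)).2 = 0 := by
  intro t ht h0
  have h2a : (gseq b n M (t+1)).2 = (gseq b n M t).2 + b - (gseq b n M t).1.card := rfl
  rw [h2a, h0]
  cases t with
  | zero =>
      exfalso
      have : (gseq b n M 0).2 = b := rfl
      omega
  | succ u =>
      have hif : (gseq b n M (u+1)).2 = (gseq b n M u).2 + b - (gseq b n M u).1.card := rfl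
      have hfst : (gseq b n M (u+1)).1
          = (if (gseq b n M u).2 + b - (gseq b n M u).1.card = 0 then M (n-2-u)
             else M (n-2-u) \ (gseq b n M u).1) := rfl
      rw [hfst, if_pos (by omega)]
      have hcard : (M (n-2-u)).card = a := hMa _ (by omega) (by omega)
      omega

lemma gseq_alive : (gseq b n M (n-2)).2 ≠ 0 → ∀ t, t ≤ n-2 → (gseq b n M t).2 ≠ 0 := by
  intro halive t ht h0
  apply halive
  have key : ∀ u, t + u ≤ n - 2 → (gseq b n M (t+u)).2 = 0 := by
    intro u
    induction u with
    | zero => intro _; simpa using h0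
    | succ u ih =>
        intro hu
        have := gseq_dead b s a n M hn hb hs hM0 hMa (t+u) (by omega) (ih (by omega))
        exact this
  have := key (n - 2 - t) (by omega)
  rwa [show t + (n-2-t) = n-2 by omega] at this

lemma gseq_pair (t : ℕ) (ht : t + 1 ≤ n - 2) (halive : (gseq b n M (t+1)).2 ≠ 0) :
    a ≤ (gseq b n M t).1.card + (gseq b n M (t+1)).1.card := by
  have hfst : (gseq b n M (t+1)).1
      = (if (gseq b n M t).2 + b - (gseq b n M t).1.card = 0 then M (n-2-t)
         else M (n-2-t) \ (gseq b n M t).1) := rfl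
  have hsnd : (gseq b n M (t+1)).2 = (gseq b n M t).2 + b - (gseq b n M t).1.card := rfl
  rw [hfst, if_neg (by rw [hsnd] at halive; exact halive)]
  have hcard : (M (n-2-t)).card = a := hMa _ (by omega) (by omega)
  have := Finset.le_card_sdiff (gseq b n M t).1 (M (n-2-t))
  omega

lemma gseq_sum (halive : (gseq b n M (n-2)).2 ≠ 0) :
    ∀ u, u ≤ n - 2 → ∃ p e, u + 1 = 2*p + e ∧ e ≤ 1 ∧
      p*a + e*(a-b) ≤ ∑ t ∈ Finset.range (u+1), (gseq b n M t).1.card := by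
  intro u
  induction u using Nat.strong_induction_on with
  | _ u ih =>
    intro hu
    match u with
    | 0 =>
        refine ⟨0, 1, by omega, le_rfl, ?_⟩
        have h1 : (M (n-1)).card = a := hMa (n-1) (by omega) le_rfl
        have h2 := Finset.le_card_sdiff (M 0) (M (n-1))
        have h3 : (gseq b n M 0).1 = M (n-1) \ M 0 := rfl
        rw [Finset.sum_range_one, h3]
        omega
    | 1 =>
        refine ⟨1, 0, by omega, by omega, ?_⟩
        have hal := gseq_alive b s a n M hn hb hs hM0 hMa halive 1 (by omega)
        have hpair := gseq_pair b s a n M hn hb hs hM0 hMa 0 (by omega) hal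
        norm_num at hpair
        rw [Finset.sum_range_succ, Finset.sum_range_one]
        omega
    | (w+2) =>
        obtain ⟨p, e, h1, h2, h3⟩ := ih w (by omega) (by omega)
        refine ⟨p+1, e, by omega, h2, ?_⟩
        have hal := gseq_alive b s a n M hn hb hs hM0 hMa halive (w+2) (by omega)
        have hpair : a ≤ (gseq b n M (w+1)).1.card + (gseq b n M (w+2)).1.card :=
          gseq_pair b s a n M hn hb hs hM0 hMa (w+1) (by omega) hal
        rw [Finset.sum_range_succ, Finset.sum_range_succ]
        have : (p+1)*a = p*a + a := by ring
        omega

lemma gseq_telescope (halive : (gseq b n M (n-2)).2 ≠ 0) :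
    ∀ u, u ≤ n - 2 → (gseq b n M u).2 + ∑ t ∈ Finset.range u, (gseq b n M t).1.card
      = (u+1)*b := by
  intro u
  induction u with
  | zero => simp [gseq]
  | succ u ihu =>
      intro hu
      have ih := ihu (by omega)
      have hal := gseq_alive b s a n M hn hb hs hM0 hMa halive (u+1) hu
      have hsnd : (gseq b n M (u+1)).2 = (gseq b n M u).2 + b - (gseq b n M u).1.card := rfl
      rw [Finset.sum_range_succ]
      have hstep : (gseq b n M (u+1)).2 + (gseq b n M u).1.card = (gseq b n M u).2 + b := by
        omega
      have : (u+1+1)*b = (u+1)*b + b := by ring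
      omega

lemma gseq_key (hks : b ≤ (n/2) * s) (halive : (gseq b n M (n-2)).2 ≠ 0) :
    (gseq b n M (n-2)).2 + b ≤ (gseq b n M (n-2)).1.card := by
  obtain ⟨p, e, h1, h2, h3⟩ := gseq_sum b s a n M hn hb hs hM0 hMa halive (n-2) le_rfl
  have hT := gseq_telescope b s a n M hn hb hs hM0 hMa halive (n-2) le_rfl
  rw [show n - 2 + 1 = n - 1 by omega] at h1 h3
  rw [show n - 1 = (n-2) + 1 by omega, Finset.sum_range_succ] at h3
  have hab : a - b = b + s := by omega
  have hnb : n * b ≤ p*a + e*(a-b) := by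
    have hpa : p*a = 2*(p*b) + p*s := by rw [hs]; ring
    rw [hab]
    interval_cases e
    · have hp : n / 2 = p := by omega
      rw [hp] at hks
      have h5 : n * b = 2*(p*b) + b := by
        have h6 : n = 2*p+1 := by omega
        rw [h6]; ring
      linarith
    · have hp : n / 2 = p + 1 := by omega
      rw [hp] at hks
      have h4 : (p+1)*s = p*s + s := by ring
      have h5 : n * b = 2*(p*b) + 2*b := by
        have h6 : n = 2*p+2 := by omega
        rw [h6]; ring
      linarith
  rw [hab] at h3 hnb
  obtain ⟨m, rfl⟩ : ∃ m, n = m + 2 := ⟨n-2, by omega⟩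
  simp only [Nat.add_sub_cancel] at h3 hT ⊢
  have h7 : (m+1)*b + b = (m+2)*b := by ring
  linarith

end

noncomputable def pick (b : ℕ) (A R : Finset ℕ) (r : ℕ) : Finset ℕ :=
  if h : ∃ C : Finset ℕ, C ⊆ A ∧ C.card = b ∧ r ≤ (C ∩ R).card then h.choose else ∅

noncomputable def cc (b n : ℕ) (M : ℕ → Finset ℕ) : ℕ → Finset ℕ
  | 0 => M 0
  | (j+1) => pick b (M (j+1) \ cc b n M j) (gseq b n M (n-1-(j+1))).1 (gseq b n M (n-1-(j+1))).2

section
set_option linter.unusedSectionVars false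
variable (b s a n : ℕ) (M : ℕ → Finset ℕ)
variable (hn : 3 ≤ n) (hb : 0 < b) (hs : a = 2*b + s)
  (hM0 : (M 0).card = b) (hMa : ∀ j, 1 ≤ j → j ≤ n-1 → (M j).card = a)
  (hks : b ≤ (n/2) * s)

include hn hb hs hM0 hMa

lemma rel_j (j : ℕ) (h1 : 1 ≤ j) (h2 : j ≤ n-2) :
    (gseq b n M (n-1-j)).2 = (gseq b n M (n-1-(j+1))).2 + b - (gseq b n M (n-1-(j+1))).1.card ∧
    ((gseq b n M (n-1-j)).2 ≠ 0 → (gseq b n M (n-1-j)).1 = M j \ (gseq b n M (n-1-(j+1))).1) := by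
  have ht : n - 1 - j = (n - 2 - j) + 1 := by omega
  have ht2 : n - 1 - (j+1) = n - 2 - j := by omega
  have ht3 : n - 2 - (n - 2 - j) = j := by omega
  rw [ht, ht2]
  constructor
  · rfl
  · intro hne
    have hfst : (gseq b n M ((n-2-j)+1)).1
        = (if (gseq b n M (n-2-j)).2 + b - (gseq b n M (n-2-j)).1.card = 0
           then M (n-2-(n-2-j)) else M (n-2-(n-2-j)) \ (gseq b n M (n-2-j)).1) := rfl
    have hsnd : (gseq b n M ((n-2-j)+1)).2
        = (gseq b n M (n-2-j)).2 + b - (gseq b n M (n-2-j)).1.card := rfl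
    rw [hfst, if_neg (by rw [← hsnd]; exact hne), ht3]

lemma bounds_j (j : ℕ) (h1 : 1 ≤ j) (h2 : j ≤ n-1) :
    (gseq b n M (n-1-j)).2 ≤ b ∧ (gseq b n M (n-1-j)).2 ≤ (gseq b n M (n-1-j)).1.card :=
  gseq_card b s a n M hn hb hs hM0 hMa (n-1-j) (by omega)

lemma subset_j (j : ℕ) (h2 : j ≤ n-1) : (gseq b n M (n-1-j)).1 ⊆ M j := by
  have := gseq_fst_subset b n M (n-1-j)
  rwa [show n-1-(n-1-j) = j by omega] at this

lemma alive_j (hal : (gseq b n M (n-1-1)).2 ≠ 0) (j : ℕ) (h1 : 1 ≤ j) (h2 : j ≤ n-1) : (gseq b n M (n-1-j)).2 ≠ 0 := by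
  have : n - 1 - 1 = n - 2 := by omega
  rw [this] at hal
  exact gseq_alive b s a n M hn hb hs hM0 hMa hal (n-1-j) (by omega)

include hks in
lemma key_j (hal : (gseq b n M (n-1-1)).2 ≠ 0) : (gseq b n M (n-1-1)).2 + b ≤ (gseq b n M (n-1-1)).1.card := by
  have h : n - 1 - 1 = n - 2 := by omega
  rw [h] at hal ⊢
  exact gseq_key b s a n M hn hb hs hM0 hMa hks hal

include hks in
lemma cc_invariant : ∀ j, j ≤ n - 2 →
    cc b n M (j+1) ⊆ M (j+1) \ cc b n M j ∧ (cc b n M (j+1)).card = b ∧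
      (gseq b n M (n-1-(j+1))).2 ≤ (cc b n M (j+1) ∩ (gseq b n M (n-1-(j+1))).1).card := by
  intro j
  induction j using Nat.strong_induction_on with
  | _ j ih =>
    intro hj
    -- card of previous
    have hprevcard : (cc b n M j).card = b := by
      match j with
      | 0 => exact hM0
      | (i+1) => exact (ih i (by omega) (by omega)).2.1
    have hMcard : (M (j+1)).card = a := hMa (j+1) (by omega) (by omega)
    have hbA : b ≤ (M (j+1) \ cc b n M j).card := by
      have := Finset.le_card_sdiff (cc b n M j) (M (j+1))
      omega
    have hsub : (gseq b n M (n-1-(j+1))).1 ⊆ M (j+1) := subset_j b s a n M hn hb hs hM0 hMa (j+1) (by omega)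
    -- main inequality : rj (j+1) ≤ ((M (j+1) \ cc j) ∩ Rj (j+1)).card
    have hinter : ((M (j+1) \ cc b n M j) ∩ (gseq b n M (n-1-(j+1))).1) = (gseq b n M (n-1-(j+1))).1 \ cc b n M j := by
      ext x
      simp only [Finset.mem_inter, Finset.mem_sdiff]
      exact ⟨fun ⟨⟨_, h2⟩, h3⟩ => ⟨h3, h2⟩, fun ⟨h1, h2⟩ => ⟨⟨hsub h1, h2⟩, h1⟩⟩
    have hmain : (gseq b n M (n-1-(j+1))).2 ≤ ((M (j+1) \ cc b n M j) ∩ (gseq b n M (n-1-(j+1))).1).card := by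
      rw [hinter]
      have hge := Finset.le_card_sdiff (cc b n M j) (gseq b n M (n-1-(j+1))).1
      have hsplit : ((cc b n M j) ∩ (gseq b n M (n-1-(j+1))).1).card + (gseq b n M (n-1-(j+1))).1.card
          ≥ (gseq b n M (n-1-(j+1))).1.card := by omega
      have hcut : (gseq b n M (n-1-(j+1))).1.card - ((cc b n M j) ∩ (gseq b n M (n-1-(j+1))).1).card
          ≤ ((gseq b n M (n-1-(j+1))).1 \ cc b n M j).card := by
        have : (gseq b n M (n-1-(j+1))).1 \ cc b n M j = (gseq b n M (n-1-(j+1))).1 \ ((cc b n M j) ∩ (gseq b n M (n-1-(j+1))).1) := by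
          ext x; simp only [Finset.mem_sdiff, Finset.mem_inter]; tauto
        rw [this]
        have := Finset.le_card_sdiff ((cc b n M j) ∩ (gseq b n M (n-1-(j+1))).1) (gseq b n M (n-1-(j+1))).1
        omega
      -- need: (cc j ∩ Rj (j+1)).card + rj (j+1) ≤ (gseq b n M (n-1-(j+1))).1.card
      match j with
      | 0 =>
          -- cc 0 = M 0, bound card inter ≤ b
          by_cases hal : (gseq b n M (n-1-(0+1))).2 ≠ 0
          · have hkey : (gseq b n M (n-1-(0+1))).2 + b ≤ (gseq b n M (n-1-(0+1))).1.card :=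
              key_j b s a n M hn hb hs hM0 hMa hks hal
            have hle : ((cc b n M 0) ∩ (gseq b n M (n-1-(0+1))).1).card ≤ (cc b n M 0).card :=
              Finset.card_le_card Finset.inter_subset_left
            omega
          · push_neg at hal
            rw [hal]; omega
      | (i+1) =>
          have IH := ih i (by omega) (by omega)
          obtain ⟨hrel, hRrel⟩ := rel_j b s a n M hn hb hs hM0 hMa (i+1) (by omega) (by omega)
          by_cases hal : (gseq b n M (n-1-(i+1))).2 ≠ 0
          · have hdisj : Disjoint (gseq b n M (n-1-(i+1))).1 (gseq b n M (n-1-(i+1+1))).1 := by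
              rw [hRrel hal]
              exact Finset.sdiff_disjoint
            have hsum := card_inter_inter (C := cc b n M (i+1)) hdisj
            have hIH3 := IH.2.2
            omega
          · push_neg at hal
            rw [hal] at hrel
            have hle : ((cc b n M (i+1)) ∩ (gseq b n M (n-1-(i+1+1))).1).card
                ≤ (cc b n M (i+1)).card :=
              Finset.card_le_card Finset.inter_subset_left
            omega
    -- bounds
    have hrb : (gseq b n M (n-1-(j+1))).2 ≤ b :=
      (bounds_j b s a n M hn hb hs hM0 hMa (j+1) (by omega) (by omega)).1
    obtain ⟨C, hC1, hC2, hC3⟩ := exists_pick b (gseq b n M (n-1-(j+1))).2 (M (j+1) \ cc b n M j)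
      (gseq b n M (n-1-(j+1))).1 hbA hmain hrb
    have hex : ∃ C : Finset ℕ, C ⊆ (M (j+1) \ cc b n M j) ∧ C.card = b ∧
        (gseq b n M (n-1-(j+1))).2 ≤ (C ∩ (gseq b n M (n-1-(j+1))).1).card := ⟨C, hC1, hC2, hC3⟩
    have hcc : cc b n M (j+1) = pick b (M (j+1) \ cc b n M j) (gseq b n M (n-1-(j+1))).1 (gseq b n M (n-1-(j+1))).2 := rfl
    rw [hcc, pick, dif_pos hex]
    exact hex.choose_spec

end

lemma mod_add_cancel (n v0 i : ℕ) (hv0 : v0 < n) (hi : i < n) :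
    (v0 + (i + (n - v0)) % n) % n = i := by
  rw [Nat.add_mod_mod, show v0 + (i + (n-v0)) = i + n by omega, Nat.add_mod_right,
    Nat.mod_eq_of_lt hi]

lemma mod_succ_shift (n v0 i : ℕ) :
    ((i+1) % n + (n - v0)) % n = ((i + (n - v0)) % n + 1) % n := by
  rw [Nat.mod_add_mod, Nat.mod_add_mod, show i + 1 + (n - v0) = i + (n - v0) + 1 by omega]

theorem sufficiency (n a b : ℕ) (hn : 3 ≤ n) (hb : 0 < b) (hab : 2*b ≤ a)
    (hks : b ≤ (n/2) * (a - 2*b)) : CycleFreeChoosable n a b := by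
  intro v0 hv0 L hL0 hLa
  set s := a - 2*b with hsdef
  have hs : a = 2*b + s := by omega
  set M : ℕ → Finset ℕ := fun j => L ((v0 + j) % n) with hM
  have hn0 : 0 < n := by omega
  have hM0 : (M 0).card = b := by
    simp only [hM]
    rw [show (v0 + 0) % n = v0 by rw [Nat.add_zero, Nat.mod_eq_of_lt hv0]]
    exact hL0
  have hMa : ∀ j, 1 ≤ j → j ≤ n-1 → (M j).card = a := by
    intro j h1 h2
    simp only [hM]
    apply hLa _ (Nat.mod_lt _ hn0)
    intro hcon
    have hmod : (v0 + j) % n = v0 % n := by rw [hcon, Nat.mod_eq_of_lt hv0]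
    have hdvd : n ∣ (v0 + j) - v0 := (Nat.modEq_iff_dvd' (by omega)).1 hmod.symm
    rw [Nat.add_sub_cancel_left] at hdvd
    have := Nat.le_of_dvd (by omega) hdvd
    omega
  have inv := cc_invariant b s a n M hn hb hs hM0 hMa hks
  -- final coloring
  refine ⟨fun i => cc b n M ((i + (n - v0)) % n), ?_, ?_⟩
  · intro i hi
    show cc b n M ((i + (n - v0)) % n) ⊆ L i ∧ (cc b n M ((i + (n - v0)) % n)).card = b
    have hj : (i + (n - v0)) % n < n := Nat.mod_lt _ hn0
    have hwj : (v0 + (i + (n - v0)) % n) % n = i := mod_add_cancel n v0 i hv0 hi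
    rcases Nat.eq_zero_or_pos ((i + (n - v0)) % n) with h0 | hpos
    · rw [h0]
      rw [h0] at hwj
      have hiv : i = v0 := by
        rw [Nat.add_zero, Nat.mod_eq_of_lt hv0] at hwj; omega
      have : cc b n M 0 = M 0 := rfl
      rw [this]
      constructor
      · simp only [hM]
        rw [show (v0 + 0) % n = v0 by rw [Nat.add_zero, Nat.mod_eq_of_lt hv0], hiv]
      · exact hM0
    · obtain ⟨j', hj'⟩ : ∃ j', (i + (n - v0)) % n = j' + 1 := ⟨(i + (n - v0)) % n - 1, by omega⟩
      rw [hj']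
      rw [hj'] at hwj
      obtain ⟨hsub, hcard, _⟩ := inv j' (by omega)
      constructor
      · intro x hx
        have := hsub hx
        rw [Finset.mem_sdiff] at this
        have hxm := this.1
        simp only [hM] at hxm
        rwa [hwj] at hxm
      · exact hcard
  · intro i hi
    have hj : (i + (n - v0)) % n < n := Nat.mod_lt _ hn0
    have hshift : ((i+1) % n + (n - v0)) % n = ((i + (n - v0)) % n + 1) % n :=
      mod_succ_shift n v0 i
    show Disjoint (cc b n M ((i + (n - v0)) % n)) (cc b n M (((i+1) % n + (n - v0)) % n))
    rw [hshift]
    set j := (i + (n - v0)) % n with hjdef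
    rcases Nat.lt_or_ge j (n-1) with hlt | hge
    · rw [Nat.mod_eq_of_lt (by omega : j + 1 < n)]
      obtain ⟨hsub, _, _⟩ := inv j (by omega)
      exact Finset.disjoint_left.2 (fun x hx hx2 =>
        ((Finset.mem_sdiff.1 (hsub hx2)).2) hx)
    · have hjeq : j = n - 1 := by omega
      rw [hjeq, show (n - 1 + 1) % n = 0 by rw [show n - 1 + 1 = n by omega, Nat.mod_self]]
      -- Disjoint (cc (n-1)) (cc 0) where cc 0 = M 0
      obtain ⟨hsub, hcard, hinter⟩ := inv (n-2) (le_refl _)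
      rw [show (n-2) + 1 = n - 1 by omega] at hsub hcard hinter
      rw [show n - 1 - (n - 1) = 0 by omega] at hinter
      have hR0 : (gseq b n M 0).1 = M (n-1) \ M 0 := rfl
      have hr0 : (gseq b n M 0).2 = b := rfl
      rw [hR0, hr0] at hinter
      have hsubR : cc b n M (n-1) ⊆ M (n-1) \ M 0 := by
        have h1 : cc b n M (n-1) ∩ (M (n-1) \ M 0) ⊆ cc b n M (n-1) :=
          Finset.inter_subset_left
        have h2 : cc b n M (n-1) ∩ (M (n-1) \ M 0) = cc b n M (n-1) :=
          Finset.eq_of_subset_of_card_le h1 (by omega)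
        rw [← h2]
        exact Finset.inter_subset_right
      have hcc0 : cc b n M 0 = M 0 := rfl
      rw [hcc0]
      exact Finset.disjoint_left.2 (fun x hx hx2 =>
        (Finset.mem_sdiff.1 (hsubR hx)).2 hx2)

end CFC

namespace CFCN


lemma split_card {C A D : Finset ℕ} (h : C ⊆ A ∪ D) (hd : Disjoint A D) :
    (C ∩ A).card + (C ∩ D).card = C.card := by
  rw [← Finset.card_union_of_disjoint (Finset.disjoint_left.2 (fun x hx1 hx2 =>
    (Finset.disjoint_left.1 hd (Finset.mem_inter.1 hx1).2) (Finset.mem_inter.1 hx2).2))]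
  rw [← Finset.inter_union_distrib_left, Finset.inter_eq_left.2 h]

lemma card_inter_inter' {C R1 R2 : Finset ℕ} (hd : Disjoint R1 R2) :
    (C ∩ R1).card + (C ∩ R2).card ≤ C.card := by
  rw [← Finset.card_union_of_disjoint (Finset.disjoint_left.2 (fun x hx1 hx2 =>
      (Finset.disjoint_left.1 hd (Finset.mem_inter.1 hx1).2) (Finset.mem_inter.1 hx2).2))]
  exact Finset.card_le_card (by
    intro x hx
    rcases Finset.mem_union.1 hx with h | h
    · exact (Finset.mem_inter.1 h).1
    · exact (Finset.mem_inter.1 h).1)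

section
variable (b s : ℕ)

def B : Finset ℕ := Finset.Ico 0 b
def X (j : ℕ) : Finset ℕ := Finset.Ico (b + (j-1)*(b+s)) (b + j*(b+s))

lemma B_card : (B b).card = b := by simp [B]

lemma X_card (j : ℕ) (hj : 1 ≤ j) : (X b s j).card = b + s := by
  obtain ⟨m, rfl⟩ : ∃ m, j = m + 1 := ⟨j-1, by omega⟩
  rw [X, Nat.card_Ico]
  have h1 : (m+1)*(b+s) = m*(b+s) + (b+s) := by ring
  simp only [Nat.add_sub_cancel]
  omega

lemma BX_disj (j : ℕ) : Disjoint (B b) (X b s j) := by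
  rw [Finset.disjoint_left]
  intro x hx hx2
  rw [B, Finset.mem_Ico] at hx
  rw [X, Finset.mem_Ico] at hx2
  omega

lemma XX_disj (i j : ℕ) (h : i < j) : Disjoint (X b s i) (X b s j) := by
  rw [Finset.disjoint_left]
  intro x hx hx2
  rw [X, Finset.mem_Ico] at hx hx2
  have : i * (b+s) ≤ (j-1) * (b+s) := Nat.mul_le_mul_right _ (by omega)
  omega

end


lemma odd_case (k a b s : ℕ) (hb : 0 < b) (hk : 1 ≤ k) (hsa : a = 2*b+s) (hks : k*s < b)
    (h : CycleFreeChoosable (2*k+1) a b) : False := by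
  set n := 2*k+1 with hn
  set L : ℕ → Finset ℕ := fun v => if v = 0 then B b else B b ∪ X b s ((v+1)/2) with hL
  have hLcard : ∀ v, v ≠ 0 → (L v).card = a := by
    intro v hv
    simp only [hL]
    rw [if_neg hv, Finset.card_union_of_disjoint (BX_disj b s _), B_card,
      X_card b s _ (by omega)]
    omega
  obtain ⟨c, hc1, hc2⟩ := h 0 (by omega) L (by simp [hL, B_card]) (fun v _ hv => hLcard v hv)
  have hc0 : c 0 = B b := by
    have h1 := (hc1 0 (by omega)).1
    simp only [hL, if_pos rfl] at h1
    exact Finset.eq_of_subset_of_card_le h1 (by rw [B_card, (hc1 0 (by omega)).2])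
  have claim : ∀ j, j ≤ k → b ≤ (c (2*j) ∩ B b).card + j*s := by
    intro j
    induction j with
    | zero =>
        intro _
        rw [Nat.mul_zero, hc0, Finset.inter_self, B_card]
        omega
    | succ j ih =>
        intro hj
        have IH := ih (by omega)
        set u := 2*j+1 with hu
        set w := 2*j+2 with hw
        have hun : u < n := by omega
        have hwn : w < n := by omega
        have hcu : c u ⊆ B b ∪ X b s (j+1) := by
          have h1 := (hc1 u hun).1
          simp only [hL] at h1
          rwa [if_neg (by omega), show (u+1)/2 = j+1 by omega] at h1
        have hcw : c w ⊆ B b ∪ X b s (j+1) := by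
          have h1 := (hc1 w hwn).1
          simp only [hL] at h1
          rwa [if_neg (by omega), show (w+1)/2 = j+1 by omega] at h1
        have d1 : Disjoint (c (2*j)) (c u) := by
          have := hc2 (2*j) (by omega)
          rwa [show (2*j+1) % n = u by rw [Nat.mod_eq_of_lt (by omega)]] at this
        have d2 : Disjoint (c u) (c w) := by
          have := hc2 u hun
          rwa [show (u+1) % n = w by rw [Nat.mod_eq_of_lt (by omega)]] at this
        have s1 : (c u ∩ B b).card + (c u ∩ X b s (j+1)).card = b := by
          rw [split_card hcu (BX_disj b s _), (hc1 u hun).2]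
        have s2 : (c w ∩ B b).card + (c w ∩ X b s (j+1)).card = b := by
          rw [split_card hcw (BX_disj b s _), (hc1 w hwn).2]
        have i1 : (B b ∩ c (2*j)).card + (B b ∩ c u).card ≤ b := by
          have := card_inter_inter' (C := B b) d1
          rwa [B_card] at this
        have i2 : (X b s (j+1) ∩ c u).card + (X b s (j+1) ∩ c w).card ≤ b + s := by
          have := card_inter_inter' (C := X b s (j+1)) d2
          rwa [X_card b s _ (by omega)] at this
        have e1 : (B b ∩ c (2*j)).card = (c (2*j) ∩ B b).card := by rw [Finset.inter_comm]
        have e2 : (B b ∩ c u).card = (c u ∩ B b).card := by rw [Finset.inter_comm]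
        have e3 : (X b s (j+1) ∩ c u).card = (c u ∩ X b s (j+1)).card := by
          rw [Finset.inter_comm]
        have e4 : (X b s (j+1) ∩ c w).card = (c w ∩ X b s (j+1)).card := by
          rw [Finset.inter_comm]
        have hmul : (j+1)*s = j*s + s := by ring
        have hgoal : 2*(j+1) = w := by omega
        rw [hgoal]
        omega
  have hfin := claim k le_rfl
  have hdisj : Disjoint (c (2*k)) (c 0) := by
    have := hc2 (2*k) (by omega)
    rwa [show (2*k+1) % n = 0 by rw [hn, Nat.mod_self]] at this
  have : (c (2*k) ∩ B b).card = 0 := by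
    rw [Finset.card_eq_zero, ← Finset.disjoint_iff_inter_eq_empty]
    rw [hc0] at hdisj
    exact hdisj
  omega


lemma even_case (k a b s : ℕ) (hb : 0 < b) (hk : 2 ≤ k) (hsa : a = 2*b+s) (hks : k*s < b)
    (h : CycleFreeChoosable (2*k) a b) : False := by
  set n := 2*k with hn
  set Y' : Finset ℕ := Finset.Ico (b + (k-1)*(b+s)) (b + (k-1)*(b+s) + b) with hY'
  have hY'sub : Y' ⊆ X b s k := by
    rw [hY', X]
    apply Finset.Ico_subset_Ico
    · omega
    · obtain ⟨m, rfl⟩ : ∃ m, k = m + 1 := ⟨k-1, by omega⟩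
      have : (m+1)*(b+s) = m*(b+s) + (b+s) := by ring
      simp only [Nat.add_sub_cancel]
      omega
  have hY'card : Y'.card = b := by rw [hY', Nat.card_Ico]; omega
  have hYdcard : ((X b s k) \ Y').card = s := by
    rw [Finset.card_sdiff_of_subset hY'sub, X_card b s k (by omega), hY'card]
    omega
  set L : ℕ → Finset ℕ := fun v =>
    if v = 0 then B b else
    if v = 2*k-2 then X b s (k-1) ∪ Y' else
    if v = 2*k-1 then B b ∪ X b s k else B b ∪ X b s ((v+1)/2) with hL
  have hLcard : ∀ v, v ≠ 0 → (L v).card = a := by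
    intro v hv
    simp only [hL]
    rw [if_neg hv]
    by_cases h1 : v = 2*k-2
    · rw [if_pos h1]
      have hdXY : Disjoint (X b s (k-1)) Y' :=
        Finset.disjoint_of_subset_right hY'sub (XX_disj b s (k-1) k (by omega))
      rw [Finset.card_union_of_disjoint hdXY, X_card b s _ (by omega), hY'card]
      omega
    · rw [if_neg h1]
      by_cases h2 : v = 2*k-1
      · rw [if_pos h2, Finset.card_union_of_disjoint (BX_disj b s _), B_card,
          X_card b s _ (by omega)]
        omega
      · rw [if_neg h2, Finset.card_union_of_disjoint (BX_disj b s _), B_card,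
          X_card b s _ (by omega)]
        omega
  obtain ⟨c, hc1, hc2⟩ := h 0 (by omega) L (by simp [hL, B_card]) (fun v _ hv => hLcard v hv)
  have hc0 : c 0 = B b := by
    have h1 := (hc1 0 (by omega)).1
    simp only [hL, if_pos rfl] at h1
    exact Finset.eq_of_subset_of_card_le h1 (by rw [B_card, (hc1 0 (by omega)).2])
  have claim : ∀ j, j ≤ k - 2 → b ≤ (c (2*j) ∩ B b).card + j*s := by
    intro j
    induction j with
    | zero =>
        intro _
        rw [Nat.mul_zero, hc0, Finset.inter_self, B_card]
        omega
    | succ j ih =>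
        intro hj
        have IH := ih (by omega)
        set u := 2*j+1 with hu
        set w := 2*j+2 with hw
        have hun : u < n := by omega
        have hwn : w < n := by omega
        have hcu : c u ⊆ B b ∪ X b s (j+1) := by
          have h1 := (hc1 u hun).1
          simp only [hL] at h1
          rwa [if_neg (by omega), if_neg (by omega), if_neg (by omega),
            show (u+1)/2 = j+1 by omega] at h1
        have hcw : c w ⊆ B b ∪ X b s (j+1) := by
          have h1 := (hc1 w hwn).1
          simp only [hL] at h1
          rwa [if_neg (by omega), if_neg (by omega), if_neg (by omega),
            show (w+1)/2 = j+1 by omega] at h1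
        have d1 : Disjoint (c (2*j)) (c u) := by
          have := hc2 (2*j) (by omega)
          rwa [show (2*j+1) % n = u by rw [Nat.mod_eq_of_lt (by omega)]] at this
        have d2 : Disjoint (c u) (c w) := by
          have := hc2 u hun
          rwa [show (u+1) % n = w by rw [Nat.mod_eq_of_lt (by omega)]] at this
        have s1 : (c u ∩ B b).card + (c u ∩ X b s (j+1)).card = b := by
          rw [split_card hcu (BX_disj b s _), (hc1 u hun).2]
        have s2 : (c w ∩ B b).card + (c w ∩ X b s (j+1)).card = b := by
          rw [split_card hcw (BX_disj b s _), (hc1 w hwn).2]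
        have i1 : (B b ∩ c (2*j)).card + (B b ∩ c u).card ≤ b := by
          have := card_inter_inter' (C := B b) d1
          rwa [B_card] at this
        have i2 : (X b s (j+1) ∩ c u).card + (X b s (j+1) ∩ c w).card ≤ b + s := by
          have := card_inter_inter' (C := X b s (j+1)) d2
          rwa [X_card b s _ (by omega)] at this
        have e1 : (B b ∩ c (2*j)).card = (c (2*j) ∩ B b).card := by rw [Finset.inter_comm]
        have e2 : (B b ∩ c u).card = (c u ∩ B b).card := by rw [Finset.inter_comm]
        have e3 : (X b s (j+1) ∩ c u).card = (c u ∩ X b s (j+1)).card := by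
          rw [Finset.inter_comm]
        have e4 : (X b s (j+1) ∩ c w).card = (c w ∩ X b s (j+1)).card := by
          rw [Finset.inter_comm]
        have hmul : (j+1)*s = j*s + s := by ring
        have hgoal : 2*(j+1) = w := by omega
        rw [hgoal]
        omega
  have hfin := claim (k-2) le_rfl
  -- half-step at vertex 2k-3
  have hu3 : (2*k-3) < n := by omega
  have hcu3 : c (2*k-3) ⊆ B b ∪ X b s (k-1) := by
    have h1 := (hc1 _ hu3).1
    simp only [hL] at h1
    rwa [if_neg (by omega), if_neg (by omega), if_neg (by omega),
      show (2*k-3+1)/2 = k-1 by omega] at h1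
  have d3 : Disjoint (c (2*(k-2))) (c (2*k-3)) := by
    have := hc2 (2*(k-2)) (by omega)
    rwa [show (2*(k-2)+1) % n = 2*k-3 by rw [Nat.mod_eq_of_lt (by omega)]; omega] at this
  have s3 : (c (2*k-3) ∩ B b).card + (c (2*k-3) ∩ X b s (k-1)).card = b := by
    rw [split_card hcu3 (BX_disj b s _), (hc1 _ hu3).2]
  have i3 : (B b ∩ c (2*(k-2))).card + (B b ∩ c (2*k-3)).card ≤ b := by
    have := card_inter_inter' (C := B b) d3
    rwa [B_card] at this
  have e5 : (B b ∩ c (2*(k-2))).card = (c (2*(k-2)) ∩ B b).card := by rw [Finset.inter_comm]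
  have e6 : (B b ∩ c (2*k-3)).card = (c (2*k-3) ∩ B b).card := by rw [Finset.inter_comm]
  -- so f := (c (2k-3) ∩ X (k-1)).card satisfies t(k-2) ≤ f
  -- backward vertex 2k-1
  have hu1 : (2*k-1) < n := by omega
  have hcv1 : c (2*k-1) ⊆ B b ∪ X b s k := by
    have h1 := (hc1 _ hu1).1
    simp only [hL] at h1
    rwa [if_neg (by omega), if_neg (by omega), if_true] at h1
  have d4 : Disjoint (c (2*k-1)) (c 0) := by
    have := hc2 (2*k-1) hu1
    rwa [show (2*k-1+1) % n = 0 by rw [show 2*k-1+1 = n by omega, Nat.mod_self]] at this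
  have hcv1Y : c (2*k-1) ⊆ X b s k := by
    intro x hx
    rcases Finset.mem_union.1 (hcv1 hx) with hxB | hxY
    · exact absurd (by rw [hc0]; exact hxB) (fun hh => Finset.disjoint_left.1 d4 hx hh)
    · exact hxY
  have hsplitY : (c (2*k-1) ∩ Y').card + (c (2*k-1) ∩ (X b s k \ Y')).card = b := by
    rw [split_card (by
        intro x hx
        rw [Finset.union_sdiff_of_subset hY'sub]
        exact hcv1Y hx) (Finset.sdiff_disjoint.symm), (hc1 _ hu1).2]
  have hYd : (c (2*k-1) ∩ (X b s k \ Y')).card ≤ s :=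
    le_trans (Finset.card_le_card Finset.inter_subset_right) (le_of_eq hYdcard)
  -- contradiction vertex 2k-2
  have hu2 : (2*k-2) < n := by omega
  have hcv2 : c (2*k-2) ⊆ X b s (k-1) ∪ Y' := by
    have h1 := (hc1 _ hu2).1
    simp only [hL] at h1
    rwa [if_neg (by omega), if_true] at h1
  have d5 : Disjoint (c (2*k-3)) (c (2*k-2)) := by
    have := hc2 (2*k-3) hu3
    rwa [show (2*k-3+1) % n = 2*k-2 by rw [Nat.mod_eq_of_lt (by omega)]; omega] at this
  have d6 : Disjoint (c (2*k-2)) (c (2*k-1)) := by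
    have := hc2 (2*k-2) hu2
    rwa [show (2*k-2+1) % n = 2*k-1 by rw [Nat.mod_eq_of_lt (by omega)]; omega] at this
  have hdXY : Disjoint (X b s (k-1)) Y' :=
    Finset.disjoint_of_subset_right hY'sub (XX_disj b s (k-1) k (by omega))
  have s4 : (c (2*k-2) ∩ X b s (k-1)).card + (c (2*k-2) ∩ Y').card = b := by
    rw [split_card hcv2 hdXY, (hc1 _ hu2).2]
  have i4 : (X b s (k-1) ∩ c (2*k-3)).card + (X b s (k-1) ∩ c (2*k-2)).card ≤ b + s := by
    have := card_inter_inter' (C := X b s (k-1)) d5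
    rwa [X_card b s _ (by omega)] at this
  have i5 : (Y' ∩ c (2*k-2)).card + (Y' ∩ c (2*k-1)).card ≤ b := by
    have := card_inter_inter' (C := Y') d6
    rwa [hY'card] at this
  have e7 : (X b s (k-1) ∩ c (2*k-3)).card = (c (2*k-3) ∩ X b s (k-1)).card := by
    rw [Finset.inter_comm]
  have e8 : (X b s (k-1) ∩ c (2*k-2)).card = (c (2*k-2) ∩ X b s (k-1)).card := by
    rw [Finset.inter_comm]
  have e9 : (Y' ∩ c (2*k-2)).card = (c (2*k-2) ∩ Y').card := by rw [Finset.inter_comm]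
  have e10 : (Y' ∩ c (2*k-1)).card = (c (2*k-1) ∩ Y').card := by rw [Finset.inter_comm]
  have hmul2 : (k-2)*s = k*s - 2*s := Nat.sub_mul k 2 s
  have hmul3 : 2*s ≤ k*s := Nat.mul_le_mul_right s hk
  omega

lemma necessity_ab (n a b : ℕ) (hn : 3 ≤ n) (hb : 0 < b)
    (h : CycleFreeChoosable n a b) : 2*b ≤ a := by
  set L : ℕ → Finset ℕ := fun v =>
    if v = 0 then Finset.Ico 0 b else
    if v ≤ 2 then Finset.Ico 0 a else Finset.Ico (a*v) (a*v+a) with hL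
  obtain ⟨c, hc1, hc2⟩ := h 0 (by omega) L
    (by simp [hL]) (by
      intro v hv hv0
      simp only [hL]
      rw [if_neg hv0]
      split <;> simp)
  have h1 := hc1 1 (by omega)
  have h2 := hc1 2 (by omega)
  have hd := hc2 1 (by omega)
  rw [show (1+1) % n = 2 by rw [Nat.mod_eq_of_lt (by omega)]] at hd
  have hsub : c 1 ∪ c 2 ⊆ Finset.Ico 0 a := by
    apply Finset.union_subset
    · have := h1.1; simpa [hL] using this
    · have := h2.1; simpa [hL] using this
  have := Finset.card_le_card hsub
  rw [Finset.card_union_of_disjoint hd] at this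
  simp only [Nat.card_Ico] at this
  omega

lemma necessity (n a b : ℕ) (hn : 3 ≤ n) (hb : 0 < b)
    (h : CycleFreeChoosable n a b) : 2*(n/2)*b + b ≤ (n/2)*a := by
  have hab : 2*b ≤ a := necessity_ab n a b hn hb h
  set k := n / 2 with hk
  set s := a - 2*b with hs
  have hsa : a = 2*b + s := by omega
  have hk1 : 1 ≤ k := by omega
  -- suffices : b ≤ k * s
  have hka : k * a = 2*k*b + k*s := by rw [hsa]; ring
  by_contra hcon
  have hks : k * s < b := by omega
  clear hcon
  have h2 : n = 2*k ∨ n = 2*k+1 := by omega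
  rcases h2 with he | ho
  · rw [he] at h
    exact even_case k a b s hb (by omega) hsa hks h
  · rw [ho] at h
    exact odd_case k a b s hb (by omega) hsa hks h

end CFCN

/-- The free-choice ratio of the cycle `C_n` is `2 + 1/⌊n/2⌋`, and every pair `(a,b)` with
`a/b ≥ 2 + 1/⌊n/2⌋` witnesses free-choosability. -/
theorem cycle_free_choice_ratio (n : ℕ) (hn : 3 ≤ n) :
    sInf {q : ℝ | ∃ a b : ℕ, 0 < b ∧ q = (a : ℝ) / (b : ℝ) ∧ CycleFreeChoosable n a b} =
        2 + ((n / 2 : ℕ) : ℝ)⁻¹ ∧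
      ∀ a b : ℕ, 0 < b → 2 + ((n / 2 : ℕ) : ℝ)⁻¹ ≤ (a : ℝ) / (b : ℝ) →
        CycleFreeChoosable n a b := by
  have hk1 : 1 ≤ n / 2 := by omega
  have hKpos : (0:ℝ) < ((n/2 : ℕ) : ℝ) := by exact_mod_cast hk1
  have hKne : ((n/2 : ℕ) : ℝ) ≠ 0 := ne_of_gt hKpos
  -- part 2
  have part2 : ∀ a b : ℕ, 0 < b → 2 + ((n / 2 : ℕ) : ℝ)⁻¹ ≤ (a : ℝ) / (b : ℝ) →
      CycleFreeChoosable n a b := by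
    intro a b hb hle
    have hBpos : (0:ℝ) < (b:ℝ) := by exact_mod_cast hb
    rw [le_div_iff₀ hBpos] at hle
    have h2 : (2 + ((n/2:ℕ):ℝ)⁻¹) * (b:ℝ) * ((n/2:ℕ):ℝ) ≤ (a:ℝ) * ((n/2:ℕ):ℝ) :=
      mul_le_mul_of_nonneg_right hle (le_of_lt hKpos)
    have h3 : (2 + ((n/2:ℕ):ℝ)⁻¹) * (b:ℝ) * ((n/2:ℕ):ℝ)
        = 2 * (b:ℝ) * ((n/2:ℕ):ℝ) + (b:ℝ) := by
      field_simp
    rw [h3] at h2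
    have hnat : 2*(n/2)*b + b ≤ (n/2)*a := by
      have : ((2*(n/2)*b + b : ℕ) : ℝ) ≤ (((n/2)*a : ℕ) : ℝ) := by
        push_cast
        linarith
      exact_mod_cast this
    have hab : 2*b ≤ a := by
      by_contra hcon
      have : a ≤ 2*b - 1 := by omega
      have h4 : (n/2)*a ≤ (n/2)*(2*b-1) := Nat.mul_le_mul_left _ this
      have h5 : (n/2)*(2*b-1) + (n/2) = (n/2)*(2*b) := by
        rw [← Nat.mul_succ]
        congr 1
        omega
      have h6 : (n/2)*(2*b) = 2*(n/2)*b := by ring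
      omega
    obtain ⟨cdiff, hcdiff⟩ : ∃ c, a = 2*b + c := ⟨a - 2*b, by omega⟩
    have hka : (n/2)*a = 2*((n/2)*b) + (n/2)*cdiff := by rw [hcdiff]; ring
    have h2u : 2*(n/2)*b = 2*((n/2)*b) := by ring
    exact CFC.sufficiency n a b hn hb hab (by rw [show a - 2*b = cdiff by omega]; omega)
  refine ⟨?_, part2⟩
  have hmem : (2 + ((n / 2 : ℕ) : ℝ)⁻¹) ∈
      {q : ℝ | ∃ a b : ℕ, 0 < b ∧ q = (a : ℝ) / (b : ℝ) ∧ CycleFreeChoosable n a b} := by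
    refine ⟨2*(n/2)+1, n/2, by omega, ?_, ?_⟩
    · push_cast
      field_simp
    · apply part2 _ _ (by omega)
      apply le_of_eq
      push_cast
      field_simp
  have hlb : ∀ q ∈ {q : ℝ | ∃ a b : ℕ, 0 < b ∧ q = (a : ℝ) / (b : ℝ) ∧
      CycleFreeChoosable n a b}, 2 + ((n / 2 : ℕ) : ℝ)⁻¹ ≤ q := by
    rintro q ⟨a, b, hb, rfl, hch⟩
    have hBpos : (0:ℝ) < (b:ℝ) := by exact_mod_cast hb
    have hnat := CFCN.necessity n a b hn hb hch
    have hreal : 2*((n/2:ℕ):ℝ)*(b:ℝ) + (b:ℝ) ≤ ((n/2:ℕ):ℝ)*(a:ℝ) := by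
      exact_mod_cast hnat
    rw [le_div_iff₀ hBpos]
    rw [← mul_le_mul_iff_right₀ hKpos]
    calc ((n/2:ℕ):ℝ) * ((2 + ((n/2:ℕ):ℝ)⁻¹) * (b:ℝ))
        = 2*((n/2:ℕ):ℝ)*(b:ℝ) + (b:ℝ) := by field_simp
      _ ≤ ((n/2:ℕ):ℝ)*(a:ℝ) := hreal
  exact le_antisymm (csInf_le ⟨_, hlb⟩ hmem) (le_csInf ⟨_, hmem⟩ hlb)
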